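/- For every ε > 0 there is δ > 0 such that: if (ξ_1,...,ξ_M) and (η_1,...,η_M) are tuples of vectors in a Hilbert space H with Σ_i ‖ξ_i‖² ≤ 1, Σ_i ‖η_i‖² ≤ 1, and |⟨ξ_i, ξ_j⟩ − ⟨η_i, η_j⟩| < δ for all i, j ≤ M, and additionally H is infinite-dimensional and ⟨ξ_i, η_j⟩ = 0 for all i, j, then there exists a self-adjoint unitary U ∈ B(H) with ‖Uξ_j − η_j‖ < ε for all j ≤ M. -/

import Mathlib

open scoped ComplexOrder
open scoped MatrixOrder

noncomputable section

namespace Stmt18Aux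

variable {H : Type} [NormedAddCommGroup H] [InnerProductSpace ℂ H]

/-- In a non-finite-dimensional inner product space, one can find an orthonormal
family of any finite size inside the orthogonal complement of any
finite-dimensional subspace. -/
lemma exists_orthonormal [CompleteSpace H] (hH : ¬ FiniteDimensional ℂ H) :
    ∀ (n : ℕ) (F : Submodule ℂ H), FiniteDimensional ℂ F →
      ∃ g : Fin n → H, Orthonormal ℂ g ∧ ∀ i, g i ∈ Fᗮ := by
  intro n
  induction n with
  | zero =>
      intro F _
      exact ⟨fun i => i.elim0, orthonormal_iff_ite.mpr (fun i => i.elim0),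
        fun i => i.elim0⟩
  | succ n ih =>
      intro F hF
      haveI := hF
      haveI : CompleteSpace F := FiniteDimensional.complete ℂ F
      have hFne : F ≠ ⊤ := by
        intro h
        refine hH ?_
        haveI : FiniteDimensional ℂ (⊤ : Submodule ℂ H) := h ▸ hF
        exact (Submodule.topEquiv (R := ℂ) (M := H)).finiteDimensional
      have hbot : Fᗮ ≠ ⊥ := by
        simp only [ne_eq, Submodule.orthogonal_eq_bot_iff]; exact hFne
      obtain ⟨x, hxF, hx0⟩ := (Submodule.ne_bot_iff _).mp hbot
      set c : ℂ := ((‖x‖⁻¹ : ℝ) : ℂ) with hc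
      set u : H := c • x with hu
      have hunorm : ‖u‖ = 1 := by
        rw [hu, norm_smul, hc]
        simp [inv_mul_cancel₀ (norm_ne_zero_iff.mpr hx0),
          abs_of_nonneg (inv_nonneg.mpr (norm_nonneg x))]
      have huF : u ∈ Fᗮ := Submodule.smul_mem _ _ hxF
      haveI : FiniteDimensional ℂ (F ⊔ Submodule.span ℂ {u} : Submodule ℂ H) := by
        haveI : FiniteDimensional ℂ (Submodule.span ℂ ({u} : Set H)) :=
          FiniteDimensional.span_of_finite ℂ (Set.finite_singleton u)
        exact Submodule.finiteDimensional_sup _ _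
      obtain ⟨g, hg, hgmem⟩ := ih (F ⊔ Submodule.span ℂ {u}) inferInstance
      have huK : u ∈ F ⊔ Submodule.span ℂ {u} :=
        Submodule.mem_sup_right (Submodule.mem_span_singleton_self u)
      have hgu : ∀ i, (inner ℂ u (g i) : ℂ) = 0 := fun i =>
        Submodule.inner_right_of_mem_orthogonal huK (hgmem i)
      have hug : ∀ i, (inner ℂ (g i) u : ℂ) = 0 := fun i => by
        rw [← inner_conj_symm, hgu, map_zero]
      have guu : (inner ℂ u u : ℂ) = 1 := by
        rw [inner_self_eq_norm_sq_to_K, hunorm]; norm_num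
      refine ⟨Fin.cons u g, ?_, ?_⟩
      · rw [orthonormal_iff_ite]
        intro i j
        induction i using Fin.cases with
        | zero =>
            induction j using Fin.cases with
            | zero => simpa using guu
            | succ j => simpa [(Fin.succ_ne_zero j).symm] using hgu j
        | succ i =>
            induction j using Fin.cases with
            | zero => simpa [Fin.succ_ne_zero i] using hug i
            | succ j => simpa [Fin.succ_inj] using orthonormal_iff_ite.mp hg i j
      · intro i
        induction i using Fin.cases with
        | zero => simpa using huF
        | succ i =>
            simpa using (Submodule.orthogonal_le le_sup_left) (hgmem i)

/-- Reflection through the span of a finite family of vectors. -/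
lemma reflection [CompleteSpace H] {K : ℕ} (v : Fin K → H) :
    ∃ U : H →L[ℂ] H, IsSelfAdjoint U ∧ U * U = 1 ∧ (∀ x, ‖U x‖ = ‖x‖) ∧
      (∀ j, U (v j) = v j) ∧
      (∀ x, (∀ i, (inner ℂ (v i) x : ℂ) = 0) → U x = -x) := by
  set S : Submodule ℂ H := Submodule.span ℂ (Set.range v) with hS
  haveI : FiniteDimensional ℂ S := FiniteDimensional.span_of_finite ℂ (Set.finite_range v)
  haveI : CompleteSpace S := FiniteDimensional.complete ℂ S
  set P : H →L[ℂ] H := S.subtypeL.comp (S.orthogonalProjectionOnto) with hPdef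
  have hPapp : ∀ x, P x = (S.orthogonalProjectionOnto x : H) := fun x => rfl
  have hP : IsSelfAdjoint P := isSelfAdjoint_starProjection S
  have hPid : ∀ x ∈ S, P x = x := by
    intro x hx
    rw [hPapp]; exact (Submodule.starProjection_eq_self_iff (K := S)).mpr hx
  have hPP : ∀ x, P (P x) = P x := by
    intro x
    exact hPid _ (by rw [hPapp]; exact (S.orthogonalProjectionOnto x).2)
  have hmul : ∀ x, (P + P - 1) ((P + P - 1) x) = x := by
    intro x
    simp only [ContinuousLinearMap.sub_apply, ContinuousLinearMap.add_apply,
      ContinuousLinearMap.one_apply, map_sub, map_add, hPP]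
    abel
  have hnorm : ∀ x, ‖(P + P - 1) x‖ = ‖x‖ := by
    intro x
    have h1 : x - P x ∈ Sᗮ := Submodule.sub_starProjection_mem_orthogonal x
    have h2 : (P + P - 1) x = P x - (x - P x) := by
      simp only [ContinuousLinearMap.sub_apply, ContinuousLinearMap.add_apply,
        ContinuousLinearMap.one_apply]
      abel
    have hPx : P x ∈ S := by rw [hPapp]; exact (S.orthogonalProjectionOnto x).2
    have h3 : (inner ℂ (P x) (x - P x) : ℂ) = 0 :=
      Submodule.inner_right_of_mem_orthogonal hPx h1
    have h4 : (inner ℂ (P x) (-(x - P x)) : ℂ) = 0 := by rw [inner_neg_right, h3, neg_zero]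
    have e1 : ‖P x + (x - P x)‖ * ‖P x + (x - P x)‖
        = ‖P x‖ * ‖P x‖ + ‖x - P x‖ * ‖x - P x‖ :=
      norm_add_sq_eq_norm_sq_add_norm_sq_of_inner_eq_zero _ _ h3
    have e2 : ‖P x + -(x - P x)‖ * ‖P x + -(x - P x)‖
        = ‖P x‖ * ‖P x‖ + ‖-(x - P x)‖ * ‖-(x - P x)‖ :=
      norm_add_sq_eq_norm_sq_add_norm_sq_of_inner_eq_zero _ _ h4
    have hx : P x + (x - P x) = x := by abel
    have hx2 : (P + P - 1) x = P x + -(x - P x) := by rw [h2]; abel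
    rw [hx2]
    rw [hx] at e1
    rw [norm_neg] at e2
    have : ‖P x + -(x - P x)‖ * ‖P x + -(x - P x)‖ = ‖x‖ * ‖x‖ := by rw [e2, ← e1]
    nlinarith [norm_nonneg (P x + -(x - P x)), norm_nonneg x]
  refine ⟨P + P - 1, ?_, ?_, hnorm, ?_, ?_⟩
  · have : star (P + P - 1 : H →L[ℂ] H) = P + P - 1 := by
      rw [star_sub, star_add, hP.star_eq, star_one]
    exact this
  · ext x
    simpa [ContinuousLinearMap.mul_apply] using hmul x
  · intro j
    have hv : v j ∈ S := Submodule.subset_span ⟨j, rfl⟩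
    simp only [ContinuousLinearMap.sub_apply, ContinuousLinearMap.add_apply,
      ContinuousLinearMap.one_apply, hPid _ hv]
    abel
  · intro x hx
    have hxS : x ∈ Sᗮ := by
      have hle : S ≤ (Submodule.span ℂ {x})ᗮ := by
        rw [hS, Submodule.span_le]
        rintro _ ⟨i, rfl⟩
        refine Submodule.mem_orthogonal_singleton_iff_inner_right.mpr ?_
        rw [← inner_conj_symm, hx i, map_zero]
      have := Submodule.orthogonal_le hle
      exact this (Submodule.le_orthogonal_orthogonal _ (Submodule.mem_span_singleton_self x))
    have hPx : P x = 0 := by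
      rw [hPapp, Submodule.orthogonalProjectionOnto_apply_of_mem_orthogonal hxS]
      rfl
    simp only [ContinuousLinearMap.sub_apply, ContinuousLinearMap.add_apply,
      ContinuousLinearMap.one_apply, hPx]
    abel

end Stmt18Aux

end

set_option maxHeartbeats 2000000 in
/-- Futamura–Kataoka–Kishimoto, Lemma 3.3: tuples of vectors with
entrywise close Gram matrices, spanning orthogonal subspaces of an
infinite-dimensional Hilbert space, are approximately swapped by a selfadjoint
unitary. -/
theorem stmt_18 (ε : ℝ) (hε : 0 < ε) :
    ∃ δ > (0 : ℝ), ∀ (M : ℕ) (H : Type) (_ : NormedAddCommGroup H)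
      (_ : InnerProductSpace ℂ H) (_ : CompleteSpace H),
      ¬ FiniteDimensional ℂ H →
      ∀ ξ η : Fin M → H,
      (∑ i, ‖ξ i‖ ^ 2) ≤ 1 → (∑ i, ‖η i‖ ^ 2) ≤ 1 →
      (∀ i j, ‖(inner ℂ (ξ i) (ξ j) : ℂ) - inner ℂ (η i) (η j)‖ < δ) →
      (∀ i j, (inner ℂ (ξ i) (η j) : ℂ) = 0) →
      ∃ U : H →L[ℂ] H, IsSelfAdjoint U ∧ U * U = 1 ∧
        ∀ j, ‖U (ξ j) - η j‖ < ε := by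
  classical
  set N : ℕ := ⌈(32:ℝ) / ε ^ 2⌉₊ + 1 with hN
  have hNpos : 0 < (N:ℝ) := by exact_mod_cast Nat.succ_pos _
  refine ⟨ε ^ 2 / (9 * N), by positivity, ?_⟩
  intro M H _ _ _ hH ξ η hξ1 hη1 hgram horth
  set δ : ℝ := ε ^ 2 / (9 * N) with hδ
  have hδpos : 0 < δ := by positivity
  set B : Finset (Fin M) := Finset.univ.filter (fun j => ε/4 ≤ ‖ξ j‖ ∨ ε/4 ≤ ‖η j‖) with hB
  set K : ℕ := B.card with hK
  -- cardinality bound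
  have hcard : (K : ℝ) ≤ (N : ℝ) := by
    have hstep : ∑ _j ∈ B, (ε/4)^2 ≤ ∑ j ∈ B, (‖ξ j‖^2 + ‖η j‖^2) := by
      apply Finset.sum_le_sum
      intro j hj
      rcases (Finset.mem_filter.mp hj).2 with h | h
      · nlinarith [norm_nonneg (η j), norm_nonneg (ξ j), hε.le]
      · nlinarith [norm_nonneg (η j), norm_nonneg (ξ j), hε.le]
    have h2 : ∑ j ∈ B, (‖ξ j‖^2 + ‖η j‖^2) ≤ 2 := by
      rw [Finset.sum_add_distrib]
      have hA : ∑ j ∈ B, ‖ξ j‖^2 ≤ ∑ j, ‖ξ j‖^2 :=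
        Finset.sum_le_sum_of_subset_of_nonneg (B.subset_univ)
          (fun j _ _ => by positivity)
      have hBP : ∑ j ∈ B, ‖η j‖^2 ≤ ∑ j, ‖η j‖^2 :=
        Finset.sum_le_sum_of_subset_of_nonneg (B.subset_univ)
          (fun j _ _ => by positivity)
      linarith
    have h1 : (K:ℝ) * (ε/4)^2 ≤ 2 := by
      have := le_trans hstep h2
      simpa [Finset.sum_const, nsmul_eq_mul, hK] using this
    have h3 : (K:ℝ) ≤ 32 / ε^2 := by
      rw [le_div_iff₀ (by positivity)]
      nlinarith [h1]
    calc (K:ℝ) ≤ 32/ε^2 := h3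
    _ ≤ (⌈(32:ℝ)/ε^2⌉₊ : ℝ) := Nat.le_ceil _
    _ ≤ (N:ℝ) := by rw [hN]; push_cast; linarith
  have hKN : K ≤ N := by exact_mod_cast hcard
  set b : Fin K → Fin M := fun i => ((B.equivFin.symm i : B) : Fin M) with hb
  have hbB : ∀ i, b i ∈ B := fun i => (B.equivFin.symm i).2
  have hbsurj : ∀ j ∈ B, ∃ i, b i = j := by
    intro j hj
    refine ⟨B.equivFin ⟨j, hj⟩, ?_⟩
    rw [hb]
    simp
  set d : ℝ := K * δ with hd
  have hd0 : 0 ≤ d := by positivity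
  -- orthonormal vectors in fresh directions
  set F : Submodule ℂ H := Submodule.span ℂ
    (Set.range (fun i => ξ (b i)) ∪ Set.range (fun i => η (b i))) with hF
  haveI hFfd : FiniteDimensional ℂ F :=
    FiniteDimensional.span_of_finite ℂ ((Set.finite_range _).union (Set.finite_range _))
  obtain ⟨e, he, heF⟩ := Stmt18Aux.exists_orthonormal hH K F hFfd
  haveI : FiniteDimensional ℂ (Submodule.span ℂ (Set.range e)) :=
    FiniteDimensional.span_of_finite ℂ (Set.finite_range e)
  obtain ⟨f, hf, hfF⟩ := Stmt18Aux.exists_orthonormal hH K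
    (F ⊔ Submodule.span ℂ (Set.range e)) (Submodule.finiteDimensional_sup _ _)
  have hfFo : ∀ j, f j ∈ Fᗮ := fun j => (Submodule.orthogonal_le le_sup_left) (hfF j)
  have hξF : ∀ i, ξ (b i) ∈ F := fun i => Submodule.subset_span (Or.inl ⟨i, rfl⟩)
  have hηF : ∀ i, η (b i) ∈ F := fun i => Submodule.subset_span (Or.inr ⟨i, rfl⟩)
  -- inner product vanishing facts
  have hξe : ∀ i j, (inner ℂ (ξ (b i)) (e j) : ℂ) = 0 := fun i j =>
    Submodule.inner_right_of_mem_orthogonal (hξF i) (heF j)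
  have heξ : ∀ i j, (inner ℂ (e i) (ξ (b j)) : ℂ) = 0 := fun i j =>
    Submodule.inner_left_of_mem_orthogonal (hξF j) (heF i)
  have hηe : ∀ i j, (inner ℂ (η (b i)) (e j) : ℂ) = 0 := fun i j =>
    Submodule.inner_right_of_mem_orthogonal (hηF i) (heF j)
  have heη : ∀ i j, (inner ℂ (e i) (η (b j)) : ℂ) = 0 := fun i j =>
    Submodule.inner_left_of_mem_orthogonal (hηF j) (heF i)
  have hξf : ∀ i j, (inner ℂ (ξ (b i)) (f j) : ℂ) = 0 := fun i j =>
    Submodule.inner_right_of_mem_orthogonal (hξF i) (hfFo j)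
  have hηf : ∀ i j, (inner ℂ (η (b i)) (f j) : ℂ) = 0 := fun i j =>
    Submodule.inner_right_of_mem_orthogonal (hηF i) (hfFo j)
  have hfη : ∀ i j, (inner ℂ (f i) (η (b j)) : ℂ) = 0 := fun i j =>
    Submodule.inner_left_of_mem_orthogonal (hηF j) (hfFo i)
  have hef : ∀ i j, (inner ℂ (e i) (f j) : ℂ) = 0 := fun i j =>
    Submodule.inner_right_of_mem_orthogonal
      (Submodule.mem_sup_right (Submodule.subset_span (Set.mem_range_self i))) (hfF j)
  -- the correction matrix
  set E : Matrix (Fin K) (Fin K) ℂ := Matrix.of (fun i j =>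
    (inner ℂ (ξ (b i)) (ξ (b j)) : ℂ) - inner ℂ (η (b i)) (η (b j))) with hE
  set A : Matrix (Fin K) (Fin K) ℂ := E + (d:ℂ) • 1 with hA
  have hEapp : ∀ i j, E i j = (inner ℂ (ξ (b i)) (ξ (b j)) : ℂ) - inner ℂ (η (b i)) (η (b j)) :=
    fun i j => rfl
  have hEnorm : ∀ i j, ‖E i j‖ < δ := fun i j => by
    rw [hEapp]; exact hgram (b i) (b j)
  have hEherm : E.IsHermitian := by
    refine Matrix.IsHermitian.ext ?_
    intro i j
    rw [hEapp, hEapp]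
    simp only [star_sub, RCLike.star_def, inner_conj_symm]
  have hAherm : A.IsHermitian := by
    refine hEherm.add ?_
    unfold Matrix.IsHermitian
    rw [Matrix.conjTranspose_smul, Matrix.conjTranspose_one, RCLike.star_def,
      Complex.conj_ofReal]
  have hApp : ∀ i j, A i j = E i j + if i = j then (d:ℂ) else 0 := by
    intro i j
    rw [hA]
    simp [Matrix.one_apply, mul_ite]
  have hAPSD : A.PosSemidef := by
    refine Matrix.PosSemidef.of_dotProduct_mulVec_nonneg hAherm ?_
    intro x
    set z : ℂ := dotProduct (star x) (A.mulVec x) with hz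
    have hconj : (starRingEnd ℂ) z = z := by
      have h1 : star z = dotProduct (star (A.mulVec x)) x := by
        rw [hz, ← Matrix.star_dotProduct_star, star_star]
      show star z = z
      rw [h1, Matrix.star_mulVec, hAherm.eq, ← Matrix.dotProduct_mulVec]
    have him : z.im = 0 := Complex.conj_eq_iff_im.mp hconj
    -- split z
    have hsplit : z = dotProduct (star x) (E.mulVec x)
        + (d:ℂ) * dotProduct (star x) x := by
      rw [hz, hA, Matrix.add_mulVec, dotProduct_add,
        Matrix.smul_mulVec, Matrix.one_mulVec, dotProduct_smul]
      simp [smul_eq_mul]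
    have hxx : dotProduct (star x) x = ((∑ i, ‖x i‖^2 : ℝ) : ℂ) := by
      rw [dotProduct]
      push_cast
      refine Finset.sum_congr rfl fun i _ => ?_
      simp only [Pi.star_apply, RCLike.star_def]
      rw [mul_comm, Complex.mul_conj, Complex.normSq_eq_norm_sq]
      norm_cast
    have hsbound : ‖dotProduct (star x) (E.mulVec x)‖ ≤ δ * (K * ∑ i, ‖x i‖^2) := by
      have step1 : ‖dotProduct (star x) (E.mulVec x)‖
          ≤ ∑ i, ‖x i‖ * (δ * ∑ j, ‖x j‖) := by
        rw [dotProduct]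
        refine le_trans (norm_sum_le _ _) (Finset.sum_le_sum fun i _ => ?_)
        rw [norm_mul, Pi.star_apply, norm_star]
        refine mul_le_mul_of_nonneg_left ?_ (norm_nonneg _)
        rw [Matrix.mulVec, dotProduct]
        refine le_trans (norm_sum_le _ _) ?_
        rw [Finset.mul_sum]
        refine Finset.sum_le_sum fun j _ => ?_
        rw [norm_mul]
        exact mul_le_mul_of_nonneg_right (hEnorm i j).le (norm_nonneg _)
      have step2 : ∑ i, ‖x i‖ * (δ * ∑ j, ‖x j‖) = δ * (∑ i, ‖x i‖)^2 := by
        rw [← Finset.sum_mul]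
        ring
      have step3 : (∑ i : Fin K, ‖x i‖)^2 ≤ K * ∑ i, ‖x i‖^2 := by
        simpa using sq_sum_le_card_mul_sum_sq (s := Finset.univ) (f := fun i : Fin K => ‖x i‖)
      calc ‖dotProduct (star x) (E.mulVec x)‖
          ≤ δ * (∑ i : Fin K, ‖x i‖)^2 := by rw [← step2]; exact step1
      _ ≤ δ * (K * ∑ i, ‖x i‖^2) := by
          exact mul_le_mul_of_nonneg_left step3 hδpos.le
    have hre : 0 ≤ z.re := by
      rw [hsplit]
      rw [Complex.add_re, hxx]
      have : ((d:ℂ) * ((∑ i, ‖x i‖^2 : ℝ) : ℂ)).re = d * ∑ i, ‖x i‖^2 := by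
        rw [← Complex.ofReal_mul]
        exact Complex.ofReal_re _
      rw [this]
      have h5 : -(δ * (K * ∑ i, ‖x i‖^2)) ≤ (dotProduct (star x) (E.mulVec x)).re := by
        have habs : |(dotProduct (star x) (E.mulVec x)).re| ≤ δ * (K * ∑ i, ‖x i‖^2) :=
          le_trans (Complex.abs_re_le_norm _) hsbound
        exact (abs_le.mp habs).1
      rw [hd]
      nlinarith [h5]
    rw [Complex.le_def]
    constructor
    · simpa using hre
    · simpa using him.symm
  -- matrix square root
  set R : Matrix (Fin K) (Fin K) ℂ := CFC.sqrt A with hR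
  have hRR : R * R = A := CFC.sqrt_mul_sqrt_self A (Matrix.nonneg_iff_posSemidef.mpr hAPSD)
  have hRherm : R.IsHermitian := (Matrix.nonneg_iff_posSemidef.mp (CFC.sqrt_nonneg A)).isHermitian
  set t : ℝ := Real.sqrt d with ht
  have htt : (t:ℂ) * (t:ℂ) = (d:ℂ) := by
    rw [← Complex.ofReal_mul]
    norm_cast
    rw [ht]
    exact Real.mul_self_sqrt hd0
  set ξ' : Fin K → H := fun j => ξ (b j) + (t:ℂ) • e j with hξ'
  set η' : Fin K → H := fun j => η (b j) + ∑ k, R k j • f k with hη'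
  have hee := orthonormal_iff_ite.mp he
  have hff := orthonormal_iff_ite.mp hf
  have hsumf : ∀ i j, (inner ℂ (∑ k, R k i • f k) (∑ l, R l j • f l) : ℂ) = A i j := by
    intro i j
    have h1 : (inner ℂ (∑ k, R k i • f k) (∑ l, R l j • f l) : ℂ)
        = ∑ k, ∑ l, (starRingEnd ℂ) (R k i) * (R l j * if k = l then 1 else 0) := by
      rw [sum_inner]
      refine Finset.sum_congr rfl fun k _ => ?_
      rw [inner_smul_left, inner_sum, Finset.mul_sum]
      refine Finset.sum_congr rfl fun l _ => ?_
      rw [inner_smul_right, hff k l]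
    rw [h1]
    have h2 : ∀ k : Fin K, ∑ l, (starRingEnd ℂ) (R k i) * (R l j * if k = l then 1 else 0)
        = (starRingEnd ℂ) (R k i) * R k j := by
      intro k
      rw [Finset.sum_eq_single k]
      · simp
      · intro l _ hlk
        rw [if_neg (fun h => hlk h.symm), mul_zero, mul_zero]
      · intro hk; exact absurd (Finset.mem_univ k) hk
    rw [Finset.sum_congr rfl (fun k _ => h2 k)]
    have h3 : ∀ k, (starRingEnd ℂ) (R k i) = R i k := fun k => hRherm.apply i k
    calc ∑ k, (starRingEnd ℂ) (R k i) * R k j = ∑ k, R i k * R k j := by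
          refine Finset.sum_congr rfl fun k _ => ?_
          rw [h3 k]
    _ = (R * R) i j := (Matrix.mul_apply).symm
    _ = A i j := by rw [hRR]
  have W1 : ∀ i j, (inner ℂ (ξ' i) (ξ' j) : ℂ)
      = inner ℂ (ξ (b i)) (ξ (b j)) + if i = j then (d:ℂ) else 0 := by
    intro i j
    simp only [hξ']
    rw [inner_add_left, inner_add_right, inner_add_right,
      inner_smul_left, inner_smul_right, inner_smul_right, inner_smul_left,
      hξe i j, heξ i j, hee i j, Complex.conj_ofReal]
    split_ifs with h
    · rw [mul_one, htt]; ring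
    · ring
  have W2 : ∀ i j, (inner ℂ (η' i) (η' j) : ℂ) = inner ℂ (η (b i)) (η (b j)) + A i j := by
    intro i j
    simp only [hη']
    rw [inner_add_left, inner_add_right, inner_add_right, hsumf i j]
    have hc1 : (inner ℂ (η (b i)) (∑ l, R l j • f l) : ℂ) = 0 := by
      rw [inner_sum]
      simp [inner_smul_right, hηf]
    have hc2 : (inner ℂ (∑ k, R k i • f k) (η (b j)) : ℂ) = 0 := by
      rw [sum_inner]
      simp [inner_smul_left, hfη]
    rw [hc1, hc2]
    ring
  have W3 : ∀ i j, (inner ℂ (ξ' i) (η' j) : ℂ) = 0 := by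
    intro i j
    simp only [hξ', hη']
    rw [inner_add_left, inner_add_right, inner_add_right]
    have h1 : (inner ℂ (ξ (b i)) (η (b j)) : ℂ) = 0 := horth _ _
    have h2 : (inner ℂ (ξ (b i)) (∑ l, R l j • f l) : ℂ) = 0 := by
      rw [inner_sum]
      simp [inner_smul_right, hξf]
    have h3 : (inner ℂ ((t:ℂ) • e i) (η (b j)) : ℂ) = 0 := by
      rw [inner_smul_left, heη]
      ring
    have h4 : (inner ℂ ((t:ℂ) • e i) (∑ l, R l j • f l) : ℂ) = 0 := by
      rw [inner_smul_left, inner_sum]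
      simp [inner_smul_right, hef]
    rw [h1, h2, h3, h4]
    ring
  have W3' : ∀ i j, (inner ℂ (η' i) (ξ' j) : ℂ) = 0 := fun i j => by
    rw [← inner_conj_symm, W3, map_zero]
  have GramEq : ∀ i j, (inner ℂ (ξ' i) (ξ' j) : ℂ) = inner ℂ (η' i) (η' j) := by
    intro i j
    rw [W1, W2, hApp, hEapp]
    ring
  set v : Fin K → H := fun j => ξ' j + η' j with hv
  obtain ⟨U, hU1, hU2, hUnorm, hUfix, hUneg⟩ := Stmt18Aux.reflection v
  have hUD : ∀ j, U (ξ' j - η' j) = -(ξ' j - η' j) := by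
    intro j
    refine hUneg _ fun i => ?_
    simp only [hv]
    rw [inner_add_left, inner_sub_right, inner_sub_right,
      GramEq i j, W3 i j, W3' i j]
    ring
  have hUξ' : ∀ j, U (ξ' j) = η' j := by
    intro j
    have h3 : U ((ξ' j + η' j) + (ξ' j - η' j)) = (ξ' j + η' j) - (ξ' j - η' j) := by
      rw [map_add, hUfix j, hUD j]
      simp only [hv]
      abel
    have h4 : (ξ' j + η' j) + (ξ' j - η' j) = (2:ℂ) • ξ' j := by
      rw [two_smul]; abel
    have h5 : (ξ' j + η' j) - (ξ' j - η' j) = (2:ℂ) • η' j := by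
      rw [two_smul]; abel
    rw [h4, h5, map_smul] at h3
    exact smul_right_injective H two_ne_zero h3
  refine ⟨U, hU1, hU2, ?_⟩
  intro j
  by_cases hj : j ∈ B
  · obtain ⟨i, rfl⟩ := hbsurj j hj
    have hKge1 : (1:ℝ) ≤ (K:ℝ) := by
      have : 0 < K := hK ▸ Finset.card_pos.mpr ⟨b i, hbB i⟩
      exact_mod_cast this
    have hδd : δ ≤ d := by
      rw [hd]
      nlinarith [hδpos.le]
    have hdN : d ≤ ε^2/9 := by
      rw [hd, hδ]
      calc (K:ℝ) * (ε ^ 2 / (9 * ↑N)) ≤ (N:ℝ) * (ε ^ 2 / (9 * ↑N)) :=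
            mul_le_mul_of_nonneg_right hcard (by positivity)
      _ = ε^2/9 := by field_simp
    have hsplit2 : U (ξ (b i)) - η (b i) = (∑ k, R k i • f k) - (t:ℂ) • U (e i) := by
      have h6 : ξ (b i) = ξ' i - (t:ℂ) • e i := by
        simp only [hξ']
        abel
      rw [h6, map_sub, map_smul, hUξ' i]
      simp only [hη']
      abel
    rw [hsplit2]
    have hwsq : ‖∑ k, R k i • f k‖^2 ≤ δ + d := by
      have h8 : ‖∑ k, R k i • f k‖^2
          = RCLike.re (inner (𝕜 := ℂ) (∑ k, R k i • f k) (∑ k, R k i • f k)) :=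
        InnerProductSpace.norm_sq_eq_re_inner _
      rw [h8, hsumf i i, hApp i i, if_pos rfl]
      have h9 : RCLike.re (E i i + (d:ℂ)) = (E i i).re + d := by
        simp [RCLike.re_to_complex]
      rw [h9]
      have h10 : (E i i).re ≤ δ :=
        le_trans (le_trans (le_abs_self _)
          (Complex.abs_re_le_norm _)) (hEnorm i i).le
      linarith
    have hw : ‖∑ k, R k i • f k‖ ≤ Real.sqrt (δ + d) := by
      rw [show (‖∑ k, R k i • f k‖ : ℝ) = Real.sqrt (‖∑ k, R k i • f k‖^2) from
        (Real.sqrt_sq (norm_nonneg _)).symm]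
      exact Real.sqrt_le_sqrt hwsq
    have hte : ‖(t:ℂ) • U (e i)‖ = t := by
      rw [norm_smul, hUnorm, he.1 i, mul_one, Complex.norm_real]
      exact abs_of_nonneg (ht ▸ Real.sqrt_nonneg d)
    calc ‖(∑ k, R k i • f k) - (t:ℂ) • U (e i)‖
        ≤ ‖∑ k, R k i • f k‖ + ‖(t:ℂ) • U (e i)‖ := norm_sub_le _ _
    _ ≤ Real.sqrt (δ + d) + t := by
        rw [hte]
        linarith [hw]
    _ ≤ Real.sqrt (2 * (ε^2/9)) + Real.sqrt (ε^2/9) :=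
        add_le_add (Real.sqrt_le_sqrt (by linarith)) (ht ▸ Real.sqrt_le_sqrt hdN)
    _ < ε := by
        have hs1 : Real.sqrt (2 * (ε^2/9)) = Real.sqrt 2 * (ε/3) := by
          rw [show (2:ℝ) * (ε^2/9) = 2 * (ε/3)^2 by ring,
            Real.sqrt_mul (by norm_num), Real.sqrt_sq (by positivity)]
        have hs2 : Real.sqrt (ε^2/9) = ε/3 := by
          rw [show (ε:ℝ)^2/9 = (ε/3)^2 by ring, Real.sqrt_sq (by positivity)]
        rw [hs1, hs2]
        nlinarith [Real.sq_sqrt (show (0:ℝ) ≤ 2 by norm_num), Real.sqrt_nonneg 2, hε]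
  · have hsm : ‖ξ j‖ < ε/4 ∧ ‖η j‖ < ε/4 := by
      simp only [hB, Finset.mem_filter, Finset.mem_univ, true_and] at hj
      push_neg at hj
      exact hj
    calc ‖U (ξ j) - η j‖ ≤ ‖U (ξ j)‖ + ‖η j‖ := norm_sub_le _ _
    _ = ‖ξ j‖ + ‖η j‖ := by rw [hUnorm]
    _ < ε := by linarith [hsm.1, hsm.2, hε]
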